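/- arXiv:math/0503694 — 2 statements merged into one kernel-verified Lean document; each statement's English description precedes it below -/
import Mathlib

section
/- Let D be a Fredholm bounded operator between Hilbert spaces H₁ and H₂ and P the orthogonal projection onto ker D. Set F = D (P + D*D)^{-1/2}. Then F*F - 1 and FF* - 1 are compact operators (in fact finite rank), so F is a unitary modulo compacts. -/
open ContinuousLinearMap
open scoped InnerProductSpace

-- finite rank => compact
lemma aux_compact_of_finrank {E F : Type*} [NormedAddCommGroup E] [NormedSpace ℂ E]
    [NormedAddCommGroup F] [NormedSpace ℂ F]
    (f : E →L[ℂ] F) (h : FiniteDimensional ℂ (LinearMap.range (f : E →ₗ[ℂ] F))) :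
    IsCompactOperator ⇑f := by
  haveI := h
  set W := LinearMap.range (f : E →ₗ[ℂ] F)
  let g : E →L[ℂ] W := f.codRestrict W (fun x => LinearMap.mem_range_self _ x)
  have hg : IsCompactOperator ⇑g := by
    refine ⟨closure (⇑g '' Metric.ball 0 1), ?_, ?_⟩
    · exact (g.lipschitz.isBounded_image Metric.isBounded_ball).isCompact_closure
    · exact Filter.mem_of_superset (Metric.ball_mem_nhds 0 one_pos)
        fun x hx => subset_closure ⟨x, hx, rfl⟩
  have : ⇑f = Subtype.val ∘ ⇑g := rfl
  rw [this]
  exact hg.continuous_comp continuous_subtype_val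

lemma aux_isUnit {H₁ H₂ : Type*}
    [NormedAddCommGroup H₁] [InnerProductSpace ℂ H₁] [CompleteSpace H₁]
    [NormedAddCommGroup H₂] [InnerProductSpace ℂ H₂] [CompleteSpace H₂]
    (D : H₁ →L[ℂ] H₂)
    (hker : FiniteDimensional ℂ (LinearMap.ker (D : H₁ →ₗ[ℂ] H₂)))
    (hclosed : IsClosed (LinearMap.range (D : H₁ →ₗ[ℂ] H₂) : Set H₂))
    (P : H₁ →L[ℂ] H₁) (hP1 : IsIdempotentElem P) (hP2 : IsSelfAdjoint P)
    (hP3 : LinearMap.range (P : H₁ →ₗ[ℂ] H₁) = LinearMap.ker (D : H₁ →ₗ[ℂ] H₂)) :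
    IsUnit (P + adjoint D ∘L D) := by
  set T := P + adjoint D ∘L D with hT
  have hPadj : adjoint P = P := by
    rw [← star_eq_adjoint]; exact hP2
  -- D bounded below on (ker D)ᗮ
  set K := (LinearMap.ker (D : H₁ →ₗ[ℂ] H₂))ᗮ with hK
  haveI : CompleteSpace K := (Submodule.isClosed_orthogonal _).completeSpace_coe
  haveI : CompleteSpace (LinearMap.ker (D : H₁ →ₗ[ℂ] H₂)) := FiniteDimensional.complete ℂ _
  haveI : CompleteSpace (LinearMap.range (D : H₁ →ₗ[ℂ] H₂)) := hclosed.completeSpace_coe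
  set D₁ : K →L[ℂ] LinearMap.range (D : H₁ →ₗ[ℂ] H₂) :=
    (D ∘L Submodule.subtypeL K).codRestrict (LinearMap.range (D : H₁ →ₗ[ℂ] H₂))
      (fun k => LinearMap.mem_range_self _ _) with hD₁
  have hker₁ : LinearMap.ker (D₁ : K →ₗ[ℂ] LinearMap.range (D : H₁ →ₗ[ℂ] H₂)) = ⊥ := by
    rw [LinearMap.ker_eq_bot']
    intro k hk
    have h1 : D k.1 = 0 := congrArg Subtype.val hk
    have h2 : (k : H₁) ∈ LinearMap.ker (D : H₁ →ₗ[ℂ] H₂) := h1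
    have h3 : (⟪(k:H₁), (k:H₁)⟫_ℂ) = 0 :=
      (Submodule.mem_orthogonal _ _).mp k.2 k.1 h2
    ext1
    exact inner_self_eq_zero.mp h3
  have hsurj₁ : LinearMap.range (D₁ : K →ₗ[ℂ] LinearMap.range (D : H₁ →ₗ[ℂ] H₂)) = ⊤ := by
    rw [LinearMap.range_eq_top]
    rintro ⟨y, x, rfl⟩
    refine ⟨⟨x - Submodule.orthogonalProjectionOnto (LinearMap.ker (D : H₁ →ₗ[ℂ] H₂)) x,
      Submodule.sub_starProjection_mem_orthogonal x⟩, ?_⟩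
    ext1
    have hm : (Submodule.orthogonalProjectionOnto (LinearMap.ker (D : H₁ →ₗ[ℂ] H₂)) x : H₁) ∈ LinearMap.ker (D : H₁ →ₗ[ℂ] H₂) :=
      (Submodule.orthogonalProjectionOnto (LinearMap.ker (D : H₁ →ₗ[ℂ] H₂)) x).2
    simp only [hD₁, coe_codRestrict_apply, comp_apply, Submodule.subtypeL_apply, map_sub]
    change D (x - (Submodule.orthogonalProjectionOnto (LinearMap.ker (D : H₁ →ₗ[ℂ] H₂)) x : H₁)) = D x
    rw [map_sub, (show D _ = 0 from LinearMap.mem_ker.mp hm)]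
    simp
  obtain ⟨C, hCnn, hCb⟩ : ∃ C : ℝ, 0 ≤ C ∧ ∀ z ∈ K, ‖z‖ ≤ C * ‖D z‖ := by
    let e := ContinuousLinearEquiv.ofBijective D₁ hker₁ hsurj₁
    refine ⟨‖(e.symm : LinearMap.range (D : H₁ →ₗ[ℂ] H₂) →L[ℂ] K)‖, norm_nonneg _, ?_⟩
    intro z hz
    have h1 : e.symm (e ⟨z, hz⟩) = ⟨z, hz⟩ := e.symm_apply_apply _
    have h2 : ‖e.symm (e ⟨z, hz⟩)‖ ≤ ‖(e.symm : LinearMap.range (D : H₁ →ₗ[ℂ] H₂) →L[ℂ] K)‖ * ‖e ⟨z, hz⟩‖ :=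
      (e.symm : LinearMap.range (D : H₁ →ₗ[ℂ] H₂) →L[ℂ] K).le_opNorm _
    rw [h1] at h2
    have h3 : ‖e ⟨z, hz⟩‖ = ‖D z‖ := rfl
    have h4 : ‖(⟨z, hz⟩ : K)‖ = ‖z‖ := rfl
    rw [h3, h4] at h2
    exact h2
  clear hD₁ hker₁ hsurj₁ D₁
  have key : ∀ x : H₁, ‖x‖ ^ 2 ≤ (2 * (1 + C ^ 2)) * (‖P x‖ ^ 2 + ‖D x‖ ^ 2) := by
    intro x
    have hbK : (x - P x) ∈ K := by
      rw [hK, Submodule.mem_orthogonal]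
      intro u hu
      rw [← hP3] at hu
      obtain ⟨w, rfl⟩ := hu
      have hadj := adjoint_inner_left P (x - P x) w
      rw [hPadj] at hadj
      erw [hadj]; rw [map_sub]
      have : P (P x) = P x := congrFun (congrArg DFunLike.coe hP1) x
      rw [this, sub_self, inner_zero_right]
    have hDb : D (x - P x) = D x := by
      have : P x ∈ LinearMap.ker (D : H₁ →ₗ[ℂ] H₂) := hP3 ▸ LinearMap.mem_range_self _ x
      rw [map_sub, (show D (P x) = 0 from LinearMap.mem_ker.mp this), sub_zero]
    have h1 : ‖x - P x‖ ≤ C * ‖D x‖ := by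
      have := hCb _ hbK; rwa [hDb] at this
    have h2 : ‖x‖ ≤ ‖P x‖ + ‖x - P x‖ := by
      have hxx : P x + (x - P x) = x := by abel
      calc ‖x‖ = ‖P x + (x - P x)‖ := by rw [hxx]
        _ ≤ _ := norm_add_le _ _
    have hnn1 := norm_nonneg (P x)
    have hnn2 := norm_nonneg (D x)
    have hnn3 := norm_nonneg (x - P x)
    have hnn4 := norm_nonneg x
    generalize ‖P x‖ = a at *
    generalize ‖D x‖ = b at *
    generalize ‖x - P x‖ = r at *
    generalize ‖x‖ = n at *
    nlinarith [sq_nonneg (a - r), sq_nonneg (C*b - r), sq_nonneg (a - C*b)]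
  have hM : (0:ℝ) < 2 * (1 + C ^ 2) := by positivity
  set c : NNReal := ⟨(2 * (1 + C ^ 2))⁻¹, by positivity⟩ with hc
  refine isUnit_of_forall_le_norm_inner_map T (c := c) ?_ ?_
  · exact_mod_cast inv_pos.mpr hM
  · intro x
    have hinner : (⟪T x, x⟫_ℂ) = ((‖P x‖ ^ 2 + ‖D x‖ ^ 2 : ℝ) : ℂ) := by
      have h1 : (⟪P x, x⟫_ℂ) = ((‖P x‖ : ℂ)) ^ 2 := by
        have hPP : P x = P (P x) := (congrFun (congrArg DFunLike.coe hP1) x).symm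
        have hadj := adjoint_inner_left P x (P x)
        rw [hPadj] at hadj
        rw [hPP, hadj, ← hPP, inner_self_eq_norm_sq_to_K]
        norm_cast
      have h2 : (⟪(adjoint D ∘L D) x, x⟫_ℂ) = ((‖D x‖ : ℂ)) ^ 2 := by
        rw [comp_apply, adjoint_inner_left, inner_self_eq_norm_sq_to_K]
        norm_cast
      rw [hT]
      simp only [add_apply, inner_add_left, h1, h2]
      push_cast
      ring
    rw [hinner]
    have : ‖((‖P x‖ ^ 2 + ‖D x‖ ^ 2 : ℝ) : ℂ)‖ = ‖P x‖ ^ 2 + ‖D x‖ ^ 2 := by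
      rw [Complex.norm_real, Real.norm_of_nonneg (by positivity)]
    rw [this]
    have hcc : (c:ℝ) = (2 * (1 + C ^ 2))⁻¹ := rfl
    rw [hcc]
    calc ‖x‖ ^ 2 * (2 * (1 + C ^ 2))⁻¹ = ‖x‖^2 / (2 * (1 + C^2)) := by ring
      _ ≤ _ := by
          rw [div_le_iff₀ hM]
          have := key x
          nlinarith [this]

lemma aux_cfc {H₁ : Type*}
    [NormedAddCommGroup H₁] [InnerProductSpace ℂ H₁] [CompleteSpace H₁]
    (T : H₁ →L[ℂ] H₁) (hsa : IsSelfAdjoint T) (hpos : (0:H₁ →L[ℂ] H₁) ≤ T)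
    (hunit : IsUnit T) :
    IsSelfAdjoint (cfc (fun x : ℝ => x ^ (-(1/2) : ℝ)) T) ∧
    cfc (fun x : ℝ => x ^ (-(1/2) : ℝ)) T * T * cfc (fun x : ℝ => x ^ (-(1/2) : ℝ)) T = 1 ∧
    cfc (fun x : ℝ => x ^ (-(1/2) : ℝ)) T * cfc (fun x : ℝ => x ^ (-(1/2) : ℝ)) T * T = 1 := by
  set f : ℝ → ℝ := fun x => x ^ (-(1/2) : ℝ) with hf
  set S := cfc f T with hS
  have hspec : ∀ x ∈ spectrum ℝ T, 0 < x := by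
    intro x hx
    refine lt_of_le_of_ne (spectrum_nonneg_of_nonneg hpos hx) ?_
    intro h
    exact (spectrum.zero_notMem_iff ℝ).mpr hunit (h ▸ hx)
  have hf_cont : ContinuousOn f (spectrum ℝ T) := fun x hx =>
    (Real.continuousAt_rpow_const x _ (Or.inl (hspec x hx).ne')).continuousWithinAt
  have hid_cont : ContinuousOn (fun x : ℝ => x) (spectrum ℝ T) := continuousOn_id
  have e1 : cfc (fun x : ℝ => f x * x) T = S * T := by
    rw [cfc_mul f (fun x => x) T hf_cont hid_cont, cfc_id' ℝ T]
  have e2 : cfc (fun x : ℝ => f x * x * f x) T = S * T * S := by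
    rw [cfc_mul (fun x => f x * x) f T (hf_cont.mul hid_cont) hf_cont, e1]
  have e1' : cfc (fun x : ℝ => f x * f x) T = S * S := by
    rw [cfc_mul f f T hf_cont hf_cont]
  have e2' : cfc (fun x : ℝ => f x * f x * x) T = S * S * T := by
    rw [cfc_mul (fun x => f x * f x) (fun x => x) T (hf_cont.mul hf_cont) hid_cont, e1',
      cfc_id' ℝ T]
  have harith : ∀ x ∈ spectrum ℝ T, f x * x * f x = 1 := by
    intro x hx
    have hx0 := hspec x hx
    rw [hf]
    have : x = x ^ (1:ℝ) := (Real.rpow_one x).symm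
    nth_rewrite 2 [this]
    rw [← Real.rpow_add hx0, ← Real.rpow_add hx0]
    norm_num
  have harith' : ∀ x ∈ spectrum ℝ T, f x * f x * x = 1 := by
    intro x hx
    have hx0 := hspec x hx
    rw [hf]
    have : x = x ^ (1:ℝ) := (Real.rpow_one x).symm
    nth_rewrite 3 [this]
    rw [← Real.rpow_add hx0, ← Real.rpow_add hx0]
    norm_num
  refine ⟨cfc_predicate f T, ?_, ?_⟩
  · rw [← e2, cfc_congr harith, cfc_const_one ℝ T]
  · rw [← e2', cfc_congr harith', cfc_const_one ℝ T]


set_option maxHeartbeats 2000000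

/-- for a Fredholm bounded operator `D : H₁ → H₂` with `P` the orthogonal
projection onto `ker D`, the operator `F = D (P + D*D)^{-1/2}` satisfies that `F*F - 1` and
`FF* - 1` are compact (in fact finite rank); i.e. `F` is a unitary modulo compacts. -/
theorem stmt_2 {H₁ H₂ : Type*}
    [NormedAddCommGroup H₁] [InnerProductSpace ℂ H₁] [CompleteSpace H₁]
    [NormedAddCommGroup H₂] [InnerProductSpace ℂ H₂] [CompleteSpace H₂]
    (D : H₁ →L[ℂ] H₂)
    (hker : FiniteDimensional ℂ (LinearMap.ker (D : H₁ →ₗ[ℂ] H₂)))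
    (hcoker : FiniteDimensional ℂ (H₂ ⧸ LinearMap.range (D : H₁ →ₗ[ℂ] H₂)))
    (hclosed : IsClosed (LinearMap.range (D : H₁ →ₗ[ℂ] H₂) : Set H₂))
    (P : H₁ →L[ℂ] H₁) (hP1 : IsIdempotentElem P) (hP2 : IsSelfAdjoint P)
    (hP3 : LinearMap.range (P : H₁ →ₗ[ℂ] H₁) = LinearMap.ker (D : H₁ →ₗ[ℂ] H₂))
    (F : H₁ →L[ℂ] H₂)
    (hF : F = D ∘L cfc (fun x : ℝ => x ^ (-(1/2) : ℝ)) (P + adjoint D ∘L D)) :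
    (IsCompactOperator ⇑(adjoint F ∘L F - 1) ∧
      FiniteDimensional ℂ (LinearMap.range ((adjoint F ∘L F - 1 : H₁ →L[ℂ] H₁) : H₁ →ₗ[ℂ] H₁))) ∧
    (IsCompactOperator ⇑(F ∘L adjoint F - 1) ∧
      FiniteDimensional ℂ (LinearMap.range ((F ∘L adjoint F - 1 : H₂ →L[ℂ] H₂) : H₂ →ₗ[ℂ] H₂))) := by
  set T : H₁ →L[ℂ] H₁ := P + adjoint D ∘L D with hT
  set S : H₁ →L[ℂ] H₁ := cfc (fun x : ℝ => x ^ (-(1/2) : ℝ)) T with hS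
  have hDDsa : IsSelfAdjoint (adjoint D ∘L D) := by
    rw [IsSelfAdjoint, star_eq_adjoint, adjoint_comp, adjoint_adjoint]
  have hTsa : IsSelfAdjoint T := hP2.add hDDsa
  have hTpos : (0 : H₁ →L[ℂ] H₁) ≤ T := by
    have h1 : (0 : H₁ →L[ℂ] H₁) ≤ P := by
      have := star_mul_self_nonneg P
      rwa [hP2.star_eq, hP1.eq] at this
    have h2 : (0 : H₁ →L[ℂ] H₁) ≤ adjoint D ∘L D := by
      rw [nonneg_iff_isPositive]
      have := (isPositive_one (E := H₂)).adjoint_conj D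
      rwa [show (1 : H₂ →L[ℂ] H₂) ∘L D = D by ext; simp] at this
    exact add_nonneg h1 h2
  have hTunit : IsUnit T := aux_isUnit D hker hclosed P hP1 hP2 hP3
  obtain ⟨hSsa, hSTS, hSST⟩ := aux_cfc T hTsa hTpos hTunit
  rw [← hS] at hSsa hSTS hSST
  have hadjS : adjoint S = S := by rw [← star_eq_adjoint]; exact hSsa
  have hadjF : adjoint F = S ∘L adjoint D := by
    rw [hF, adjoint_comp, hadjS]
  have hDD : adjoint D ∘L D = T - P := by rw [hT]; abel
  -- Part 1 : F*F - 1 = -(S * (P * S))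
  have hA : adjoint F ∘L F - 1 = -(S * (P * S)) := by
    have h1 : adjoint F ∘L F = S * ((adjoint D ∘L D) * S) := by
      rw [hadjF, hF]; rfl
    rw [h1, hDD]
    have h2 : S * ((T - P) * S) = S * T * S - S * (P * S) := by noncomm_ring
    rw [h2, hSTS]
    abel
  haveI : FiniteDimensional ℂ (Submodule.map (S : H₁ →ₗ[ℂ] H₁) (LinearMap.ker (D : H₁ →ₗ[ℂ] H₂))) := by
    haveI := hker; exact Module.Finite.map _ _
  have hrange1 : LinearMap.range ((adjoint F ∘L F - 1 : H₁ →L[ℂ] H₁) : H₁ →ₗ[ℂ] H₁) ≤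
      Submodule.map (S : H₁ →ₗ[ℂ] H₁) (LinearMap.ker (D : H₁ →ₗ[ℂ] H₂)) := by
    rintro y ⟨x, rfl⟩
    rw [hA]
    have hmem : P (S x) ∈ LinearMap.ker (D : H₁ →ₗ[ℂ] H₂) := hP3 ▸ LinearMap.mem_range_self _ _
    have : ((-(S * (P * S)) : H₁ →L[ℂ] H₁) : H₁ →ₗ[ℂ] H₁) x = -(S (P (S x))) := rfl
    rw [this]
    exact neg_mem (Submodule.mem_map_of_mem hmem)
  have hfin1 : FiniteDimensional ℂ (LinearMap.range ((adjoint F ∘L F - 1 : H₁ →L[ℂ] H₁) : H₁ →ₗ[ℂ] H₁)) :=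
    Submodule.finiteDimensional_of_le hrange1
  -- Part 2
  have hBz : ∀ y ∈ LinearMap.range (D : H₁ →ₗ[ℂ] H₂), (F ∘L adjoint F - 1) y = 0 := by
    rintro _ ⟨x, rfl⟩
    change (F ∘L adjoint F - 1) (D x) = 0
    set x' := x - P x with hx'
    have hPx : P x ∈ LinearMap.ker (D : H₁ →ₗ[ℂ] H₂) := hP3 ▸ LinearMap.mem_range_self _ _
    have hDx' : D x' = D x := by
      rw [hx', map_sub, (show D (P x) = 0 from LinearMap.mem_ker.mp hPx), sub_zero]
    have hPx' : P x' = 0 := by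
      have hPP : P (P x) = P x := congrFun (congrArg DFunLike.coe hP1) x
      rw [hx', map_sub, hPP, sub_self]
    have hDT : adjoint D (D x') = T x' := by
      have : adjoint D (D x') = (T - P) x' := by rw [← hDD]; rfl
      rw [this, sub_apply, hPx', sub_zero]
    have hcomp : (F ∘L adjoint F) (D x') = D (S (S (adjoint D (D x')))) := by
      rw [hF, adjoint_comp, hadjS]; rfl
    have hSST : S (S (T x')) = x' := by
      have : (S * S * T) x' = S (S (T x')) := rfl
      rw [← this, hSST, ContinuousLinearMap.one_apply]
    rw [sub_apply, ContinuousLinearMap.one_apply, ← hDx', hcomp, hDT, hSST, sub_self]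
  have hBsa : IsSelfAdjoint (F ∘L adjoint F - 1) := by
    refine IsSelfAdjoint.sub ?_ (IsSelfAdjoint.one _)
    rw [IsSelfAdjoint, star_eq_adjoint, adjoint_comp, adjoint_adjoint]
  haveI : CompleteSpace (LinearMap.range (D : H₁ →ₗ[ℂ] H₂)) := hclosed.completeSpace_coe
  haveI hfinperp : FiniteDimensional ℂ ((LinearMap.range (D : H₁ →ₗ[ℂ] H₂))ᗮ) := by
    have hc : IsCompl (LinearMap.range (D : H₁ →ₗ[ℂ] H₂)) ((LinearMap.range (D : H₁ →ₗ[ℂ] H₂))ᗮ) :=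
      Submodule.isCompl_orthogonal_of_hasOrthogonalProjection
    exact (Submodule.quotientEquivOfIsCompl _ _ hc).finiteDimensional
  have hrange2 : LinearMap.range ((F ∘L adjoint F - 1 : H₂ →L[ℂ] H₂) : H₂ →ₗ[ℂ] H₂) ≤ (LinearMap.range (D : H₁ →ₗ[ℂ] H₂))ᗮ := by
    rintro _ ⟨w, rfl⟩
    rw [Submodule.mem_orthogonal]
    intro u hu
    have h1 : (⟪(F ∘L adjoint F - 1) u, w⟫_ℂ) = ⟪u, (F ∘L adjoint F - 1) w⟫_ℂ := by
      have := adjoint_inner_left (F ∘L adjoint F - 1) w u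
      rwa [← star_eq_adjoint, hBsa.star_eq] at this
    erw [← h1, hBz u hu, inner_zero_left]
  have hfin2 : FiniteDimensional ℂ (LinearMap.range ((F ∘L adjoint F - 1 : H₂ →L[ℂ] H₂) : H₂ →ₗ[ℂ] H₂)) :=
    Submodule.finiteDimensional_of_le hrange2
  exact ⟨⟨aux_compact_of_finrank _ hfin1, hfin1⟩, ⟨aux_compact_of_finrank _ hfin2, hfin2⟩⟩
end

section
/- Let D be a Fredholm bounded operator on a Hilbert space H such that the commutator [D, f] is compact for every f in a C*-subalgebra A ⊆ B(H). Then for the normalization F = D(P + D*D)^{-1/2}, where P is the projection onto ker D, the commutators [F, f] are compact for all f ∈ A. -/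
open ContinuousLinearMap Metric

section Helpers

variable {H : Type*} [NormedAddCommGroup H] [InnerProductSpace ℂ H] [CompleteSpace H]

/-- Composition of a bounded operator with a compact one is compact. -/
lemma aux_mul_compact (M N : H →L[ℂ] H) (h : IsCompactOperator ⇑N) :
    IsCompactOperator ⇑(M * N) := by
  have : ⇑(M * N) = ⇑M ∘ ⇑N := rfl
  rw [this]
  exact h.continuous_comp M.continuous

/-- Composition of a compact operator with a bounded one is compact. -/
lemma aux_compact_mul (M N : H →L[ℂ] H) (h : IsCompactOperator ⇑M) :
    IsCompactOperator ⇑(M * N) := by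
  have : ⇑(M * N) = ⇑M ∘ ⇑N := rfl
  rw [this]
  exact h.comp_clm N

lemma aux_sub_compact (M N : H →L[ℂ] H) (hM : IsCompactOperator ⇑M)
    (hN : IsCompactOperator ⇑N) : IsCompactOperator ⇑(M - N) := by
  have : ⇑(M - N) = ⇑M - ⇑N := by ext x; simp
  rw [this]
  exact hM.sub hN

lemma aux_add_compact (M N : H →L[ℂ] H) (hM : IsCompactOperator ⇑M)
    (hN : IsCompactOperator ⇑N) : IsCompactOperator ⇑(M + N) := by
  have : ⇑(M + N) = ⇑M + ⇑N := by ext x; simp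
  rw [this]
  exact hM.add hN

/-- If `A* A` is compact then `A` is compact (Hilbert space version). -/
lemma compact_of_adjoint_mul_self (A : H →L[ℂ] H)
    (h : IsCompactOperator ⇑(adjoint A * A)) : IsCompactOperator ⇑A := by
  set B := adjoint A * A with hB
  have hkey : ∀ u v : H, ‖A u - A v‖ ^ 2 ≤ ‖B u - B v‖ * ‖u - v‖ := by
    intro u v
    have e1 : A u - A v = A (u - v) := by simp [map_sub]
    have e2 : B u - B v = B (u - v) := by simp [map_sub]
    have h1 : ‖A (u - v)‖ ^ 2 = RCLike.re (inner ℂ (B (u - v)) (u - v) : ℂ) := by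
      have e3 : (inner ℂ (B (u - v)) (u - v) : ℂ) = inner ℂ (A (u - v)) (A (u - v)) := by
        simp only [hB, mul_apply]
        exact adjoint_inner_left A _ _
      rw [e3, inner_self_eq_norm_sq]
    rw [e1, e2, h1]
    calc RCLike.re (inner ℂ (B (u - v)) (u - v) : ℂ) ≤ ‖(inner ℂ (B (u - v)) (u - v) : ℂ)‖ :=
          RCLike.re_le_norm _
      _ ≤ ‖B (u - v)‖ * ‖u - v‖ := norm_inner_le_norm _ _
  have hBcpt : IsCompact (closure (⇑B '' closedBall 0 1)) :=
    h.isCompact_closure_image_closedBall 1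
  have htb : TotallyBounded (⇑A '' closedBall 0 1) := by
    rw [Metric.totallyBounded_iff]
    intro ε hε
    have htbB : TotallyBounded (⇑B '' closedBall 0 1) :=
      hBcpt.totallyBounded.subset subset_closure
    obtain ⟨t, htf, hcov⟩ := (Metric.totallyBounded_iff.mp htbB) (ε ^ 2 / 8) (by positivity)
    classical
    have hch : ∀ y ∈ t, ∃ u : H, (⇑B '' closedBall 0 1 ∩ ball y (ε ^ 2 / 8)).Nonempty →
        u ∈ closedBall (0:H) 1 ∧ B u ∈ ball y (ε ^ 2 / 8) := by
      intro y _
      by_cases hne : (⇑B '' closedBall 0 1 ∩ ball y (ε ^ 2 / 8)).Nonempty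
      · obtain ⟨z, ⟨u, hu, rfl⟩, hz2⟩ := hne
        exact ⟨u, fun _ => ⟨hu, hz2⟩⟩
      · exact ⟨0, fun hc => absurd hc hne⟩
    choose! x hx using hch
    refine ⟨(⇑A ∘ x) '' t, htf.image _, ?_⟩
    rintro - ⟨u, hu, rfl⟩
    obtain ⟨y, hyt, hy⟩ := Set.mem_iUnion₂.mp (hcov ⟨u, hu, rfl⟩)
    have hne : (⇑B '' closedBall 0 1 ∩ ball y (ε ^ 2 / 8)).Nonempty := ⟨B u, ⟨u, hu, rfl⟩, hy⟩
    obtain ⟨hx1, hx2⟩ := hx y hyt hne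
    refine Set.mem_iUnion₂.mpr ⟨A (x y), Set.mem_image_of_mem _ hyt, ?_⟩
    have h3 : ‖B u - B (x y)‖ ≤ ε ^ 2 / 4 := by
      have d1 : dist (B u) y < ε ^ 2 / 8 := mem_ball.mp hy
      have d2 : dist (B (x y)) y < ε ^ 2 / 8 := mem_ball.mp hx2
      calc ‖B u - B (x y)‖ = dist (B u) (B (x y)) := (dist_eq_norm _ _).symm
        _ ≤ dist (B u) y + dist (B (x y)) y := dist_triangle_right _ _ _
        _ ≤ ε ^ 2 / 4 := by linarith
    have h4 : ‖u - x y‖ ≤ 2 := by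
      calc ‖u - x y‖ ≤ ‖u‖ + ‖x y‖ := norm_sub_le _ _
        _ ≤ 1 + 1 := add_le_add (mem_closedBall_zero_iff.mp hu) (mem_closedBall_zero_iff.mp hx1)
        _ = 2 := by norm_num
    have h2 : ‖A u - A (x y)‖ ^ 2 ≤ ε ^ 2 / 4 * 2 :=
      le_trans (hkey u (x y)) (mul_le_mul h3 h4 (norm_nonneg _) (by positivity))
    rw [mem_ball, dist_eq_norm]
    nlinarith [norm_nonneg (A u - A (x y))]
  refine ⟨closure (⇑A '' closedBall 0 1), ?_, ?_⟩
  · rw [isCompact_iff_totallyBounded_isComplete]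
    exact ⟨htb.closure, isClosed_closure.isComplete⟩
  · exact Filter.mem_of_superset (closedBall_mem_nhds 0 one_pos)
      fun z hz => subset_closure (Set.mem_image_of_mem _ hz)

/-- The adjoint of a compact operator is compact (Schauder). -/
lemma aux_adjoint_compact (M : H →L[ℂ] H) (h : IsCompactOperator ⇑M) :
    IsCompactOperator ⇑(adjoint M) := by
  apply compact_of_adjoint_mul_self
  have e : adjoint (adjoint M) * adjoint M = M * adjoint M := by rw [adjoint_adjoint]
  rw [e]
  exact aux_compact_mul M (adjoint M) h

/-- A finite-rank bounded operator is compact. -/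
lemma compact_of_finiteDimensional_range (P : H →L[ℂ] H)
    (hfin : FiniteDimensional ℂ (LinearMap.range (P : H →ₗ[ℂ] H))) : IsCompactOperator ⇑P := by
  set V : Submodule ℂ H := LinearMap.range (P : H →ₗ[ℂ] H)
  have : ProperSpace V := FiniteDimensional.proper ℂ V
  refine ⟨(V.subtypeL) '' closedBall 0 ‖P‖, ?_, ?_⟩
  · exact (isCompact_closedBall _ _).image V.subtypeL.continuous
  · refine Filter.mem_of_superset (closedBall_mem_nhds 0 one_pos) fun z hz => ?_
    refine ⟨⟨P z, LinearMap.mem_range_self _ z⟩, ?_, rfl⟩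
    rw [mem_closedBall_zero_iff]
    calc ‖(⟨P z, _⟩ : V)‖ = ‖P z‖ := rfl
      _ ≤ ‖P‖ * ‖z‖ := P.le_opNorm z
      _ ≤ ‖P‖ * 1 :=
          mul_le_mul_of_nonneg_left (mem_closedBall_zero_iff.mp hz) (norm_nonneg P)
      _ = ‖P‖ := mul_one _

/-- The set of operators whose commutators with all elements of `A` are compact,
as an `ℝ`-subalgebra of `B(H)`. -/
def commAlg (A : StarSubalgebra ℂ (H →L[ℂ] H)) : Subalgebra ℝ (H →L[ℂ] H) where
  carrier := {X | ∀ f ∈ A, IsCompactOperator ⇑(X * f - f * X)}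
  mul_mem' {X Y} hX hY := by
    intro f hf
    have e : X * Y * f - f * (X * Y) = X * (Y * f - f * Y) + (X * f - f * X) * Y := by
      noncomm_ring
    rw [e]
    exact aux_add_compact _ _ (aux_mul_compact _ _ (hY f hf))
      (aux_compact_mul _ _ (hX f hf))
  add_mem' {X Y} hX hY := by
    intro f hf
    have e : (X + Y) * f - f * (X + Y) = (X * f - f * X) + (Y * f - f * Y) := by
      noncomm_ring
    rw [e]
    exact aux_add_compact _ _ (hX f hf) (hY f hf)
  one_mem' := by
    intro f hf
    have e : (1 : H →L[ℂ] H) * f - f * 1 = 0 := by noncomm_ring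
    rw [e]
    exact isCompactOperator_zero
  zero_mem' := by
    intro f hf
    have e : (0 : H →L[ℂ] H) * f - f * 0 = 0 := by noncomm_ring
    rw [e]
    exact isCompactOperator_zero
  algebraMap_mem' r := by
    intro f hf
    have e : algebraMap ℝ (H →L[ℂ] H) r * f - f * algebraMap ℝ (H →L[ℂ] H) r = 0 := by
      rw [Algebra.commutes r f, sub_self]
    rw [e]
    exact isCompactOperator_zero

lemma commAlg_isClosed (A : StarSubalgebra ℂ (H →L[ℂ] H)) :
    IsClosed ((commAlg A : Subalgebra ℝ (H →L[ℂ] H)) : Set (H →L[ℂ] H)) := by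
  have e : ((commAlg A : Subalgebra ℝ (H →L[ℂ] H)) : Set (H →L[ℂ] H)) =
      ⋂ f ∈ (A : Set (H →L[ℂ] H)),
        (fun X : H →L[ℂ] H => X * f - f * X) ⁻¹' {M : H →L[ℂ] H | IsCompactOperator ⇑M} := by
    ext X
    simp only [Set.mem_iInter, Set.mem_preimage, Set.mem_setOf_eq]
    rfl
  rw [e]
  refine isClosed_biInter fun f hf => IsClosed.preimage ?_ isClosed_setOf_isCompactOperator
  exact (continuous_id.mul continuous_const).sub (continuous_const.mul continuous_id)

/-- A continuous function of a selfadjoint element lies in any closed subalgebra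
containing the element. -/
lemma cfc_mem_closed_subalgebra {T : H →L[ℂ] H} (hT : IsSelfAdjoint T)
    (S : Subalgebra ℝ (H →L[ℂ] H)) (hS : IsClosed (S : Set (H →L[ℂ] H))) (hTS : T ∈ S)
    (g : ℝ → ℝ) (hg : ContinuousOn g (spectrum ℝ T)) : cfc g T ∈ S := by
  rw [cfc_apply g T hT hg]
  set s := spectrum ℝ T
  set φ : C(s, ℝ) →⋆ₐ[ℝ] (H →L[ℂ] H) := cfcHom hT
  let Φ : Subalgebra ℝ C(s, ℝ) := S.comap φ.toAlgHom
  have hX : φ (Polynomial.toContinuousMapOnAlgHom s Polynomial.X) = T := by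
    have : (Polynomial.toContinuousMapOnAlgHom s Polynomial.X)
        = (ContinuousMap.id ℝ).restrict s := by
      ext x; simp
    rw [this]
    exact cfcHom_id hT
  have hpoly : polynomialFunctions s ≤ Φ := by
    rw [polynomialFunctions.eq_adjoin_X]
    refine Algebra.adjoin_le ?_
    rintro x hx
    rw [Set.mem_singleton_iff] at hx
    subst hx
    show φ _ ∈ S
    rw [hX]; exact hTS
  have hΦclosed : IsClosed (Φ : Set C(s, ℝ)) :=
    hS.preimage (cfcHom_continuous hT)
  have htop : (polynomialFunctions s).topologicalClosure = ⊤ :=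
    polynomialFunctions.topologicalClosure s
  have hle : (⊤ : Subalgebra ℝ C(s, ℝ)) ≤ Φ := by
    rw [← htop]
    exact Subalgebra.topologicalClosure_minimal hpoly hΦclosed
  exact hle Algebra.mem_top

end Helpers

/-- if `D` is a Fredholm operator on a Hilbert space `H` whose commutators
`[D, f]` with all elements `f` of a C*-subalgebra `A ⊆ B(H)` are compact, then the
normalization `F = D (P + D*D)^{-1/2}` (with `P` the orthogonal projection onto `ker D`)
also has compact commutators `[F, f]` for all `f ∈ A`. -/
theorem stmt_3 {H : Type*}
    [NormedAddCommGroup H] [InnerProductSpace ℂ H] [CompleteSpace H]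
    (D : H →L[ℂ] H)
    (hker : FiniteDimensional ℂ (LinearMap.ker (D : H →ₗ[ℂ] H)))
    (hcoker : FiniteDimensional ℂ (H ⧸ LinearMap.range (D : H →ₗ[ℂ] H)))
    (hclosed : IsClosed (LinearMap.range (D : H →ₗ[ℂ] H) : Set H))
    (A : StarSubalgebra ℂ (H →L[ℂ] H)) (hA : IsClosed (A : Set (H →L[ℂ] H)))
    (hcomm : ∀ f ∈ A, IsCompactOperator ⇑(D * f - f * D))
    (P : H →L[ℂ] H) (hP1 : IsIdempotentElem P) (hP2 : IsSelfAdjoint P)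
    (hP3 : LinearMap.range (P : H →ₗ[ℂ] H) = LinearMap.ker (D : H →ₗ[ℂ] H))
    (F : H →L[ℂ] H)
    (hF : F = D * cfc (fun x : ℝ => x ^ (-(1/2) : ℝ)) (P + adjoint D * D)) :
    ∀ f ∈ A, IsCompactOperator ⇑(F * f - f * F) := by
  set T : H →L[ℂ] H := P + adjoint D * D with hTdef
  set g : ℝ → ℝ := fun x : ℝ => x ^ (-(1/2) : ℝ) with hg
  -- T is selfadjoint
  have hDD : IsSelfAdjoint (adjoint D * D) := by
    rw [← star_eq_adjoint]; exact IsSelfAdjoint.star_mul_self D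
  have hT : IsSelfAdjoint T := hP2.add hDD
  by_cases hgc : ContinuousOn g (spectrum ℝ T)
  · -- main case
    -- P is compact
    have hPfin : FiniteDimensional ℂ (LinearMap.range (P : H →ₗ[ℂ] H)) := by rw [hP3]; exact hker
    have hPcpt : IsCompactOperator ⇑P := compact_of_finiteDimensional_range P hPfin
    -- D ∈ commAlg A
    have hD : D ∈ commAlg A := hcomm
    -- adjoint D ∈ commAlg A
    have hDadj : adjoint D ∈ commAlg A := by
      intro f hf
      have hfstar : star f ∈ A := star_mem hf
      have h1 : IsCompactOperator ⇑(D * star f - star f * D) := hcomm _ hfstar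
      have h2 : IsCompactOperator ⇑(adjoint (D * star f - star f * D)) :=
        aux_adjoint_compact _ h1
      have e : adjoint (D * star f - star f * D) = -(adjoint D * f - f * adjoint D) := by
        simp only [← star_eq_adjoint, star_sub, star_mul, star_star]
        noncomm_ring
      rw [e] at h2
      have := h2.neg
      have e2 : -⇑(-(adjoint D * f - f * adjoint D)) = ⇑(adjoint D * f - f * adjoint D) := by
        ext x; simp
      rwa [e2] at this
    -- P ∈ commAlg A
    have hPmem : P ∈ commAlg A := by
      intro f hf
      exact aux_sub_compact _ _ (aux_compact_mul _ _ hPcpt) (aux_mul_compact _ _ hPcpt)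
    -- T ∈ commAlg A
    have hTmem : T ∈ commAlg A := by
      rw [hTdef]
      exact (commAlg A).add_mem hPmem ((commAlg A).mul_mem hDadj hD)
    -- cfc g T ∈ commAlg A
    have hG : cfc g T ∈ commAlg A :=
      cfc_mem_closed_subalgebra hT (commAlg A) (commAlg_isClosed A) hTmem g hgc
    -- conclude
    intro f hf
    set G : H →L[ℂ] H := cfc g T
    have hFG : F = D * G := hF
    have e : F * f - f * F = D * (G * f - f * G) + (D * f - f * D) * G := by
      rw [hFG]; noncomm_ring
    rw [e]
    exact aux_add_compact _ _ (aux_mul_compact _ _ (hG f hf))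
      (aux_compact_mul _ _ (hcomm f hf))
  · -- degenerate case: cfc is junk 0
    have hcfc : cfc g T = 0 := cfc_apply_of_not_continuousOn T hgc
    intro f hf
    have : F = 0 := by rw [hF, hcfc, mul_zero]
    rw [this]
    have e : (0 : H →L[ℂ] H) * f - f * 0 = 0 := by noncomm_ring
    rw [e]
    exact isCompactOperator_zero
end
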